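/- Let s, t > 0 and suppose EXP-(s,t)-WT holds. Then for every M > 0 there exists T > 0 such that for every d ≥ 1 and all integers k_1,…,k_d with k_i ≥ 2 and λ_{k_i} > 0 for all i, if d + max_{1≤i≤d} k_i ≥ T then (d^t + (∑_{i=1}^d log γ_i⁻¹)^s + (∑_{i=1}^d log λ_{k_i}⁻¹)^s) / (∑_{i=1}^d log k_i) ≥ M. -/

import Mathlib

open Filter Real Set Topology
open scoped ENNReal NNReal

noncomputable section

/-- The weighted eigenvalues `λ_{k,j}`: `1` if `j = 1`, and `γ_k · λ_j` if `j ≥ 2`. -/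
def lamKJ (γ lam : ℕ → ℝ) (k j : ℕ) : ℝ := if j = 1 then 1 else γ k * lam j

/-- The information complexity `n(ε,d)`: the extended-natural cardinality of the set of
`d`-tuples of positive integers `(n_1,…,n_d)` with `λ_{1,n_1} ⋯ λ_{d,n_d} > ε²`. -/
def infoN (γ lam : ℕ → ℝ) (ε : ℝ) (d : ℕ) : ℕ∞ :=
  {n : Fin d → ℕ | (∀ i, 1 ≤ n i) ∧ ε ^ 2 < ∏ i, lamKJ γ lam (i.1 + 1) (n i)}.encard

/-- EXP-SPT with a given exponent `p`: there is `C ≥ 0` with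
`n(ε,d) ≤ C (1 + log ε⁻¹)^p` for all `d ≥ 1` and `ε ∈ (0,1]`. -/
def ExpSPTwith (γ lam : ℕ → ℝ) (p : ℝ) : Prop :=
  ∃ C : ℝ, 0 ≤ C ∧ ∀ d : ℕ, 1 ≤ d → ∀ ε : ℝ, 0 < ε → ε ≤ 1 →
    (infoN γ lam ε d : ℝ≥0∞) ≤ ENNReal.ofReal (C * (1 + Real.log ε⁻¹) ^ p)

/-- Exponential strong polynomial tractability. -/
def ExpSPT (γ lam : ℕ → ℝ) : Prop := ∃ p : ℝ, 0 ≤ p ∧ ExpSPTwith γ lam p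

/-- Exponential polynomial tractability: there are `C, q, p ≥ 0` with
`n(ε,d) ≤ C d^q (1 + log ε⁻¹)^p` for all `d ≥ 1` and `ε ∈ (0,1]`. -/
def ExpPT (γ lam : ℕ → ℝ) : Prop :=
  ∃ C q p : ℝ, 0 ≤ C ∧ 0 ≤ q ∧ 0 ≤ p ∧ ∀ d : ℕ, 1 ≤ d → ∀ ε : ℝ, 0 < ε → ε ≤ 1 →
    (infoN γ lam ε d : ℝ≥0∞) ≤ ENNReal.ofReal (C * (d : ℝ) ^ q * (1 + Real.log ε⁻¹) ^ p)

/-- EXP-QPT with a given exponent `t`. -/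
def ExpQPTwith (γ lam : ℕ → ℝ) (t : ℝ) : Prop :=
  ∃ C : ℝ, 0 ≤ C ∧ ∀ d : ℕ, 1 ≤ d → ∀ ε : ℝ, 0 < ε → ε ≤ 1 →
    (infoN γ lam ε d : ℝ≥0∞) ≤
      ENNReal.ofReal (C * Real.exp (t * (1 + Real.log d) * (1 + Real.log (1 + Real.log ε⁻¹))))

/-- Exponential quasi-polynomial tractability. -/
def ExpQPT (γ lam : ℕ → ℝ) : Prop := ∃ t : ℝ, 0 ≤ t ∧ ExpQPTwith γ lam t

/-- Exponential `(s,t)`-weak tractability: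
`log max(1, n(ε,d)) / (d^t + (1 + log ε⁻¹)^s) → 0` as `d + ε⁻¹ → ∞`
(in particular `n(ε,d)` is finite for all such `d, ε`). -/
def ExpSTWT (γ lam : ℕ → ℝ) (s t : ℝ) : Prop :=
  ∀ δ : ℝ, 0 < δ → ∃ T : ℝ, ∀ d : ℕ, 1 ≤ d → ∀ ε : ℝ, 0 < ε → ε ≤ 1 →
    T ≤ (d : ℝ) + ε⁻¹ →
    ∃ N : ℕ, infoN γ lam ε d = (N : ℕ∞) ∧
      Real.log (max 1 (N : ℝ)) / ((d : ℝ) ^ t + (1 + Real.log ε⁻¹) ^ s) < δ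

/-- `j(ε) = max { j ≥ 1 : λ_j > ε² }` (a well-defined maximum when `λ_j → 0`). -/
def jEps (lam : ℕ → ℝ) (ε : ℝ) : ℕ := sSup {j : ℕ | 1 ≤ j ∧ ε ^ 2 < lam j}

/-- `d(ε) = max { d ≥ 1 : γ_d > ε² }`, with `d(ε) = 0` if `γ_1 ≤ ε²`
(a well-defined maximum when `γ_d → 0`). -/
def dEps (γ : ℕ → ℝ) (ε : ℝ) : ℕ := sSup {d : ℕ | 1 ≤ d ∧ ε ^ 2 < γ d}

private lemma aux_mul_le_one {a b : ℝ} (ha0 : 0 ≤ a) (ha1 : a ≤ 1) (hb0 : 0 ≤ b)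
    (hb1 : b ≤ 1) : a * b ≤ 1 := by nlinarith

private lemma aux_glr {g l r : ℝ} (hg0 : 0 ≤ g) (hg1 : g ≤ 1) (hl : 0 ≤ l) (hr0 : 0 ≤ r)
    (hr1 : r ≤ 1) : (g * l) * r ≤ l := by
  calc (g * l) * r ≤ (g * l) * 1 := mul_le_mul_of_nonneg_left hr1 (mul_nonneg hg0 hl)
    _ = g * l := mul_one _
    _ ≤ 1 * l := mul_le_mul_of_nonneg_right hg1 hl
    _ = l := one_mul _

private lemma aux_sq_lt {a b : ℝ} (h0 : 0 ≤ a) (h : a < b) : a ^ 2 < b ^ 2 := by nlinarith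

set_option maxHeartbeats 2000000 in
/-- Lemma 4: if EXP-(s,t)-WT holds, then for every M > 0 there is T > 0
such that for all d ≥ 1 and integers k_1,…,k_d ≥ 2 with λ_{k_i} > 0, if
d + max_i k_i ≥ T then
(d^t + (∑ log γ_i⁻¹)^s + (∑ log λ_{k_i}⁻¹)^s) / (∑ log k_i) ≥ M. -/
theorem stmt13 (γ lam : ℕ → ℝ)
    (hlam_anti : AntitoneOn lam (Set.Ici 1)) (hlam1 : lam 1 = 1) (hlam2 : 0 < lam 2)
    (hlam_nonneg : ∀ j, 1 ≤ j → 0 ≤ lam j)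
    (hγ_anti : AntitoneOn γ (Set.Ici 1))
    (hγ_pos : ∀ j, 1 ≤ j → 0 < γ j) (hγ_le : ∀ j, 1 ≤ j → γ j ≤ 1)
    (s t : ℝ) (hs : 0 < s) (ht : 0 < t) (hwt : ExpSTWT γ lam s t) :
    ∀ M : ℝ, 0 < M → ∃ T : ℝ, 0 < T ∧
      ∀ d : ℕ, 1 ≤ d → ∀ k : Fin d → ℕ, (∀ i, 2 ≤ k i) → (∀ i, 0 < lam (k i)) →
        T ≤ (d : ℝ) + ((Finset.univ.sup k : ℕ) : ℝ) →
        M ≤ ((d : ℝ) ^ t + (∑ i : Fin d, Real.log ((γ (i.1 + 1))⁻¹)) ^ s +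
              (∑ i : Fin d, Real.log ((lam (k i))⁻¹)) ^ s) /
            (∑ i : Fin d, Real.log (k i)) := by

  intro M hM
  have h6 : (0:ℝ) < (6:ℝ) ^ s := Real.rpow_pos_of_pos (by norm_num) s
  set K : ℝ := 1 + (6:ℝ) ^ s with hKdef
  have hKpos : 0 < K := by linarith
  obtain ⟨T₂, hT₂⟩ := hwt (1 / (M * K)) (by positivity)
  obtain ⟨T₁, hT₁⟩ := hwt 1 one_pos
  set T₀ : ℝ := max T₂ 1 with hT₀def
  have hT₀pos : (0:ℝ) < T₀ := lt_of_lt_of_le one_pos (le_max_right _ _)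
  set c : ℝ := 2 / T₀ ^ 2 with hcdef
  have hcpos : 0 < c := by positivity
  have hγ1 : 0 < γ 1 := hγ_pos 1 le_rfl
  -- Step 1: a bound J such that lam j > c with j ≥ 2 forces j ≤ J
  obtain ⟨J, hJ⟩ : ∃ J : ℕ, ∀ j : ℕ, 2 ≤ j → c < lam j → j ≤ J := by
    set ε' : ℝ := min 1 (Real.sqrt (γ 1 * c / 2)) with hε'def
    have hsq : Real.sqrt (γ 1 * c / 2) ^ 2 = γ 1 * c / 2 := Real.sq_sqrt (by positivity)
    have hε'pos : 0 < ε' := lt_min one_pos (Real.sqrt_pos.mpr (by positivity))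
    have hε'le : ε' ≤ 1 := min_le_left _ _
    have hε'sq : ε' ^ 2 < γ 1 * c := by
      have h1 : ε' ^ 2 ≤ Real.sqrt (γ 1 * c / 2) ^ 2 :=
        pow_le_pow_left₀ hε'pos.le (min_le_right _ _) 2
      rw [hsq] at h1
      have hp : 0 < γ 1 * c := mul_pos hγ1 hcpos
      linarith
    set d₀ : ℕ := max 1 (⌈T₁⌉₊) with hd₀def
    have hd₀1 : 1 ≤ d₀ := le_max_left _ _
    have hd₀T : T₁ ≤ (d₀ : ℝ) + ε'⁻¹ := by
      have h1 : T₁ ≤ (⌈T₁⌉₊ : ℝ) := Nat.le_ceil T₁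
      have h2 : ((⌈T₁⌉₊ : ℕ) : ℝ) ≤ (d₀ : ℝ) := Nat.cast_le.mpr (le_max_right _ _)
      have h3 : 0 < ε'⁻¹ := by positivity
      linarith
    obtain ⟨N', hN', -⟩ := hT₁ d₀ hd₀1 ε' hε'pos hε'le hd₀T
    rw [infoN] at hN'
    set Sc : Set ℕ := {j | 2 ≤ j ∧ c < lam j} with hScdef
    have hfin : Sc.Finite := by
      set φ : ℕ → (Fin d₀ → ℕ) := fun j i => if i.1 = 0 then j else 1 with hφdef
      have hinj : Set.InjOn φ Sc := by
        intro a _ b _ hab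
        have := congrFun hab ⟨0, hd₀1⟩
        simpa [φ] using this
      have hsub : φ '' Sc ⊆
          {n : Fin d₀ → ℕ | (∀ i, 1 ≤ n i) ∧ ε' ^ 2 < ∏ i, lamKJ γ lam (i.1 + 1) (n i)} := by
        rintro _ ⟨j, ⟨hj2, hjc⟩, rfl⟩
        constructor
        · intro i
          by_cases h : i.1 = 0 <;> simp [φ, h] <;> omega
        · have hprod : ∏ i : Fin d₀, lamKJ γ lam (i.1 + 1) (φ j i) = γ 1 * lam j := by
            rw [Finset.prod_eq_single (⟨0, hd₀1⟩ : Fin d₀)]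
            · have hj1 : j ≠ 1 := by omega
              simp [φ, lamKJ, hj1]
            · intro b _ hb
              have hb0 : b.1 ≠ 0 := fun h => hb (Fin.ext h)
              simp [φ, hb0, lamKJ]
            · intro h
              exact absurd (Finset.mem_univ _) h
          rw [hprod]
          calc ε' ^ 2 < γ 1 * c := hε'sq
            _ ≤ γ 1 * lam j := mul_le_mul_of_nonneg_left hjc.le hγ1.le
      have hlt : Sc.encard < ⊤ := by
        rw [← Set.InjOn.encard_image hinj]
        calc (φ '' Sc).encard ≤ _ := Set.encard_le_encard hsub
          _ = (N' : ℕ∞) := hN'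
          _ < ⊤ := ENat.coe_lt_top N'
      exact Set.encard_lt_top_iff.mp hlt
    obtain ⟨J, hJ'⟩ := hfin.bddAbove
    exact ⟨J, fun j h2 hc => hJ' ⟨h2, hc⟩⟩
  refine ⟨T₀ + (J : ℝ) + 2, by positivity, ?_⟩
  intro d hd k hk2 hkpos hTle
  have hγpos' : ∀ i : Fin d, 0 < γ (i.1 + 1) := fun i => hγ_pos _ (by omega)
  have hγle' : ∀ i : Fin d, γ (i.1 + 1) ≤ 1 := fun i => hγ_le _ (by omega)
  have hk1 : ∀ i : Fin d, (1:ℕ) ≤ k i := fun i => le_trans one_le_two (hk2 i)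
  have hlamle1 : ∀ i : Fin d, lam (k i) ≤ 1 := by
    intro i
    have h := hlam_anti (Set.mem_Ici.mpr le_rfl) (Set.mem_Ici.mpr (hk1 i)) (hk1 i)
    rwa [hlam1] at h
  set P : ℝ := ∏ i : Fin d, (γ (i.1 + 1) * lam (k i)) with hPdef
  have hPpos : 0 < P := Finset.prod_pos fun i _ => mul_pos (hγpos' i) (hkpos i)
  have hPle1 : P ≤ 1 := Finset.prod_le_one
    (fun i _ => (mul_pos (hγpos' i) (hkpos i)).le)
    (fun i _ => aux_mul_le_one (hγpos' i).le (hγle' i) (hkpos i).le (hlamle1 i))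
  set ε₀ : ℝ := Real.sqrt (P / 2) with hε₀def
  have hε₀pos : 0 < ε₀ := Real.sqrt_pos.mpr (by positivity)
  have hε₀sq : ε₀ ^ 2 = P / 2 := Real.sq_sqrt (by positivity)
  have hε₀le1 : ε₀ ≤ 1 := by
    rw [show (1:ℝ) = Real.sqrt 1 from Real.sqrt_one.symm]
    exact Real.sqrt_le_sqrt (by linarith)
  set Sg : ℝ := ∑ i : Fin d, Real.log ((γ (i.1 + 1))⁻¹) with hSg
  set Sl : ℝ := ∑ i : Fin d, Real.log ((lam (k i))⁻¹) with hSl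
  have hSgnn : 0 ≤ Sg := Finset.sum_nonneg fun i _ => by
    rw [Real.log_inv]
    linarith [Real.log_nonpos (hγpos' i).le (hγle' i)]
  have hSlnn : 0 ≤ Sl := Finset.sum_nonneg fun i _ => by
    rw [Real.log_inv]
    linarith [Real.log_nonpos (hkpos i).le (hlamle1 i)]
  set D : ℝ := ∑ i : Fin d, Real.log (k i) with hDdef
  have hDpos : 0 < D := Finset.sum_pos
    (fun i _ => Real.log_pos (by exact_mod_cast Nat.lt_of_lt_of_le one_lt_two (hk2 i)))
    ⟨⟨0, hd⟩, Finset.mem_univ _⟩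
  have hlogP : Real.log P = -(Sg + Sl) := by
    rw [hPdef, Real.log_prod (fun i _ => (mul_pos (hγpos' i) (hkpos i)).ne')]
    rw [hSg, hSl, ← Finset.sum_add_distrib, ← Finset.sum_neg_distrib]
    refine Finset.sum_congr rfl fun i _ => ?_
    rw [Real.log_mul (hγpos' i).ne' (hkpos i).ne', Real.log_inv, Real.log_inv]
    ring
  have hlogε : Real.log ε₀⁻¹ = (Real.log 2 + Sg + Sl) / 2 := by
    rw [Real.log_inv, hε₀def, Real.log_sqrt (by positivity),
      Real.log_div hPpos.ne' two_ne_zero, hlogP]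
    ring
  have hlog2pos : (0:ℝ) < Real.log 2 := Real.log_pos one_lt_two
  have hlog2 : Real.log 2 ≤ 1 := by
    have := Real.log_le_sub_one_of_pos (show (0:ℝ) < 2 by norm_num)
    linarith
  have hlognn : 0 ≤ Real.log ε₀⁻¹ := by rw [hlogε]; linarith
  have hbase : 1 + Real.log ε₀⁻¹ ≤ 2 + Sg + Sl := by rw [hlogε]; linarith
  set m : ℝ := max 2 (max Sg Sl) with hm
  have hm2 : (2:ℝ) ≤ m := le_max_left _ _
  have hmnn : (0:ℝ) ≤ m := by linarith
  have hsum3 : 2 + Sg + Sl ≤ 3 * m := by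
    have h1 : Sg ≤ m := le_trans (le_max_left _ _) (le_max_right _ _)
    have h2 : Sl ≤ m := le_trans (le_max_right _ _) (le_max_right _ _)
    linarith
  have hg : (0:ℝ) ≤ Sg ^ s := Real.rpow_nonneg hSgnn s
  have hl : (0:ℝ) ≤ Sl ^ s := Real.rpow_nonneg hSlnn s
  have h2s : (0:ℝ) ≤ (2:ℝ) ^ s := Real.rpow_nonneg (by norm_num) s
  have hms : m ^ s ≤ (2:ℝ) ^ s + Sg ^ s + Sl ^ s := by
    rcases max_choice (2:ℝ) (max Sg Sl) with h | h
    · rw [hm, h]; linarith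
    · rcases max_choice Sg Sl with h' | h' <;> rw [hm, h, h'] <;> linarith
  have hdpos : (0:ℝ) < (d:ℝ) := by exact_mod_cast hd
  have hdt1 : (1:ℝ) ≤ (d:ℝ) ^ t := Real.one_le_rpow (by exact_mod_cast hd) ht.le
  have hdtpos : (0:ℝ) < (d:ℝ) ^ t := Real.rpow_pos_of_pos hdpos t
  have key : (1 + Real.log ε₀⁻¹) ^ s ≤
      (6:ℝ) ^ s * (d:ℝ) ^ t + (6:ℝ) ^ s * Sg ^ s + (6:ℝ) ^ s * Sl ^ s := by
    have step1 : (1 + Real.log ε₀⁻¹) ^ s ≤ (3 * m) ^ s :=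
      Real.rpow_le_rpow (by linarith) (le_trans hbase hsum3) hs.le
    have step2 : ((3:ℝ) * m) ^ s = (3:ℝ) ^ s * m ^ s := Real.mul_rpow (by norm_num) hmnn
    have h3s : (0:ℝ) < (3:ℝ) ^ s := Real.rpow_pos_of_pos (by norm_num) s
    have h36 : (3:ℝ) ^ s ≤ (6:ℝ) ^ s := Real.rpow_le_rpow (by norm_num) (by norm_num) hs.le
    have h6eq : (6:ℝ) ^ s = (3:ℝ) ^ s * (2:ℝ) ^ s := by
      rw [← Real.mul_rpow (by norm_num) (by norm_num)]; norm_num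
    have step3 : (3:ℝ) ^ s * m ^ s ≤ (3:ℝ) ^ s * ((2:ℝ) ^ s + Sg ^ s + Sl ^ s) :=
      mul_le_mul_of_nonneg_left hms h3s.le
    have step4 : (6:ℝ) ^ s ≤ (6:ℝ) ^ s * (d:ℝ) ^ t := le_mul_of_one_le_right h6.le hdt1
    have step5 : (3:ℝ) ^ s * Sg ^ s ≤ (6:ℝ) ^ s * Sg ^ s := mul_le_mul_of_nonneg_right h36 hg
    have step6 : (3:ℝ) ^ s * Sl ^ s ≤ (6:ℝ) ^ s * Sl ^ s := mul_le_mul_of_nonneg_right h36 hl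
    have step3' : (3:ℝ) ^ s * ((2:ℝ) ^ s + Sg ^ s + Sl ^ s) =
        (6:ℝ) ^ s + (3:ℝ) ^ s * Sg ^ s + (3:ℝ) ^ s * Sl ^ s := by rw [h6eq]; ring
    linarith [step1, step2.le, step2.ge, step3, step3', step4, step5, step6]
  by_cases hcase : T₂ ≤ (d:ℝ) + ε₀⁻¹
  · obtain ⟨N, hN, hNlt⟩ := hT₂ d hd ε₀ hε₀pos hε₀le1 hcase
    rw [infoN] at hN
    have hcount : (∏ i : Fin d, k i) ≤ N := by
      have hsub : ↑(Fintype.piFinset fun i : Fin d => Finset.Icc 1 (k i)) ⊆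
          {n : Fin d → ℕ | (∀ i, 1 ≤ n i) ∧ ε₀ ^ 2 < ∏ i, lamKJ γ lam (i.1 + 1) (n i)} := by
        intro n hn
        rw [Finset.mem_coe, Fintype.mem_piFinset] at hn
        have hn' : ∀ i, 1 ≤ n i ∧ n i ≤ k i := fun i => Finset.mem_Icc.mp (hn i)
        refine ⟨fun i => (hn' i).1, ?_⟩
        have hge : P ≤ ∏ i : Fin d, lamKJ γ lam (i.1 + 1) (n i) := by
          rw [hPdef]
          refine Finset.prod_le_prod (fun i _ => (mul_pos (hγpos' i) (hkpos i)).le)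
            (fun i _ => ?_)
          by_cases h1 : n i = 1
          · rw [lamKJ, if_pos h1]
            exact aux_mul_le_one (hγpos' i).le (hγle' i) (hkpos i).le (hlamle1 i)
          · rw [lamKJ, if_neg h1]
            have hni : (1:ℕ) ≤ n i := (hn' i).1
            have hmono : lam (k i) ≤ lam (n i) :=
              hlam_anti (Set.mem_Ici.mpr hni) (Set.mem_Ici.mpr (hk1 i)) (hn' i).2
            exact mul_le_mul_of_nonneg_left hmono (hγpos' i).le
        rw [hε₀sq]
        linarith
      have h1 : ((∏ i : Fin d, k i : ℕ) : ℕ∞) ≤ (N : ℕ∞) := by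
        calc ((∏ i : Fin d, k i : ℕ) : ℕ∞)
            = ((Fintype.piFinset fun i : Fin d => Finset.Icc 1 (k i)).card : ℕ∞) := by
              rw [Fintype.card_piFinset]
              congr 1
              refine Finset.prod_congr rfl fun i _ => ?_
              rw [Nat.card_Icc]
              omega
          _ = (↑(Fintype.piFinset fun i : Fin d => Finset.Icc 1 (k i)) :
                Set (Fin d → ℕ)).encard := (Set.encard_coe_eq_coe_finsetCard _).symm
          _ ≤ _ := Set.encard_le_encard hsub
          _ = (N : ℕ∞) := hN
      exact_mod_cast h1
    have hprodpos : (0:ℝ) < ∏ i : Fin d, (k i : ℝ) :=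
      Finset.prod_pos fun i _ => by exact_mod_cast Nat.lt_of_lt_of_le Nat.zero_lt_one (hk1 i)
    have hDlog : D = Real.log (∏ i : Fin d, (k i : ℝ)) := by
      rw [Real.log_prod fun i _ => by
        exact_mod_cast (Nat.lt_of_lt_of_le Nat.zero_lt_one (hk1 i)).ne']
    have hDN : D ≤ Real.log (max 1 (N:ℝ)) := by
      rw [hDlog]
      apply Real.log_le_log hprodpos
      calc (∏ i : Fin d, (k i : ℝ)) = ((∏ i : Fin d, k i : ℕ) : ℝ) := by push_cast; ring
        _ ≤ (N:ℝ) := by exact_mod_cast hcount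
        _ ≤ max 1 (N:ℝ) := le_max_right _ _
    set Den : ℝ := (d:ℝ) ^ t + (1 + Real.log ε₀⁻¹) ^ s with hDen
    have hDenpos : 0 < Den :=
      add_pos_of_pos_of_nonneg hdtpos (Real.rpow_nonneg (by linarith) s)
    have hDlt : D < (1 / (M * K)) * Den := by
      have h := (div_lt_iff₀ hDenpos).mp hNlt
      linarith
    have hDenle : Den ≤ K * ((d:ℝ) ^ t + Sg ^ s + Sl ^ s) := by
      have e : K * ((d:ℝ) ^ t + Sg ^ s + Sl ^ s) =
          ((d:ℝ) ^ t + (6:ℝ) ^ s * (d:ℝ) ^ t + (6:ℝ) ^ s * Sg ^ s + (6:ℝ) ^ s * Sl ^ s)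
            + (Sg ^ s + Sl ^ s) := by rw [hKdef]; ring
      rw [hDen, e]
      linarith
    have hfin : M * D ≤ (d:ℝ) ^ t + Sg ^ s + Sl ^ s := by
      have h1 : D < ((d:ℝ) ^ t + Sg ^ s + Sl ^ s) / M := by
        calc D < (1 / (M * K)) * Den := hDlt
          _ ≤ (1 / (M * K)) * (K * ((d:ℝ) ^ t + Sg ^ s + Sl ^ s)) :=
            mul_le_mul_of_nonneg_left hDenle (by positivity)
          _ = ((d:ℝ) ^ t + Sg ^ s + Sl ^ s) / M := by
            field_simp
      have h2 := (lt_div_iff₀ hM).mp h1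
      linarith [h2, mul_comm D M]
    rw [le_div_iff₀ hDpos]
    linarith
  · exfalso
    push_neg at hcase
    have hεinvpos : 0 < ε₀⁻¹ := by positivity
    have hdlt : (d:ℝ) < T₀ := lt_of_lt_of_le (by linarith) (le_max_left T₂ 1)
    have hεlt : ε₀⁻¹ < T₀ := lt_of_lt_of_le (by linarith) (le_max_left T₂ 1)
    have hPgt : c < P := by
      have h1 : T₀⁻¹ < ε₀ := by
        have := (inv_lt_inv₀ hT₀pos hεinvpos).mpr hεlt
        rwa [inv_inv] at this
      have h2 : T₀⁻¹ ^ 2 < ε₀ ^ 2 := aux_sq_lt (by positivity) h1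
      rw [hε₀sq] at h2
      have hce : c = 2 * T₀⁻¹ ^ 2 := by
        rw [hcdef, inv_pow]
        field_simp
      rw [hce]
      linarith
    obtain ⟨i0, -, hi0⟩ :=
      Finset.exists_mem_eq_sup Finset.univ (Finset.univ_nonempty_iff.mpr ⟨⟨0, hd⟩⟩) k
    have hPle : P ≤ lam (k i0) := by
      have hsplit : P = (γ (i0.1 + 1) * lam (k i0)) *
          ∏ i ∈ Finset.univ.erase i0, (γ (i.1 + 1) * lam (k i)) := by
        rw [hPdef]
        exact (Finset.mul_prod_erase Finset.univ _ (Finset.mem_univ i0)).symm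
      have hR0 : (0:ℝ) ≤ ∏ i ∈ Finset.univ.erase i0, (γ (i.1 + 1) * lam (k i)) :=
        Finset.prod_nonneg fun i _ => (mul_pos (hγpos' i) (hkpos i)).le
      have hR1 : (∏ i ∈ Finset.univ.erase i0, (γ (i.1 + 1) * lam (k i))) ≤ 1 :=
        Finset.prod_le_one (fun i _ => (mul_pos (hγpos' i) (hkpos i)).le)
          (fun i _ => aux_mul_le_one (hγpos' i).le (hγle' i) (hkpos i).le (hlamle1 i))
      rw [hsplit]
      exact aux_glr (hγpos' i0).le (hγle' i0) (hkpos i0).le hR0 hR1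
    have hcl : c < lam (k i0) := lt_of_lt_of_le hPgt hPle
    have hJle := hJ (k i0) (hk2 i0) hcl
    have hsup : ((Finset.univ.sup k : ℕ) : ℝ) ≤ (J:ℝ) := by
      rw [hi0]; exact_mod_cast hJle
    linarith
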